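/- Strang-type abstract error estimate: let V be a Hilbert space, a a symmetric continuous (constant M) coercive (constant α) bilinear form on V, V_h ⊆ V a closed subspace, a_h a symmetric bilinear form on V_h satisfying α⋆ a(v,v) ≤ a_h(v,v) ≤ α* a(v,v) for all v ∈ V_h. Let w ∈ V solve a(w,v) = F(v) for all v ∈ V and w_h ∈ V_h solve a_h(w_h,v_h) = F_h(v_h) for all v_h ∈ V_h, where F, F_h are continuous linear functionals. Then for every w_I ∈ V_h, ‖w − w_h‖ ≤ C( ‖w − w_I‖ + sup_{v_h ∈ V_h, v_h ≠ 0} |a(w,v_h) − a_h(w_I,v_h)| / ‖v_h‖ + sup_{v_h ∈ V_h, v_h ≠ 0} |F(v_h) − F_h(v_h)| / ‖v_h‖ ), where C depends only on α, α⋆, α*, M. -/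
import Mathlib

/-- Cauchy–Schwarz for a nonnegative symmetric bilinear form along a line. -/
lemma cs_aux {V : Type} [AddCommGroup V] [Module ℝ V]
    (ah : V →ₗ[ℝ] V →ₗ[ℝ] ℝ) (u v : V)
    (hsymm : ah u v = ah v u)
    (hnn : ∀ t : ℝ, 0 ≤ ah (u + t • v) (u + t • v)) :
    (ah u v) ^ 2 ≤ ah u u * ah v v := by
  have h : ∀ t : ℝ, 0 ≤ ah v v * (t * t) + (2 * ah u v) * t + ah u u := by
    intro t
    have h0 := hnn t
    simp only [map_add, map_smul, LinearMap.add_apply, LinearMap.smul_apply,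
      smul_eq_mul] at h0
    have he : ah v v * (t * t) + (2 * ah u v) * t + ah u u
        = ah u u + t * ah v u + t * (ah u v + t * ah v v) := by
      rw [hsymm]; ring
    linarith [h0, he.ge, he.le]
  have hd := discrim_le_zero h
  rw [discrim] at hd
  nlinarith

/-- Strang-type abstract error estimate (abstract version of Theorem 3.1). -/
theorem stmt4 (M α αlow αup : ℝ)
    (hM : 0 < M) (hα : 0 < α) (hαlow : 0 < αlow) (hαup : 0 < αup) :
    ∃ C > 0, ∀ (V : Type) [NormedAddCommGroup V] [InnerProductSpace ℝ V]
      [CompleteSpace V],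
      ∀ (Vh : Submodule ℝ V), IsClosed (Vh : Set V) →
      ∀ (a ah : V →ₗ[ℝ] V →ₗ[ℝ] ℝ),
      (∀ u v, a u v = a v u) →
      (∀ u v, |a u v| ≤ M * ‖u‖ * ‖v‖) →
      (∀ v, α * ‖v‖ ^ 2 ≤ a v v) →
      (∀ u ∈ Vh, ∀ v ∈ Vh, ah u v = ah v u) →
      (∀ v ∈ Vh, αlow * a v v ≤ ah v v ∧ ah v v ≤ αup * a v v) →
      ∀ (F Fh : V →L[ℝ] ℝ) (w : V), (∀ v, a w v = F v) →
      ∀ wh ∈ Vh, (∀ vh ∈ Vh, ah wh vh = Fh vh) →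
      ∀ wI ∈ Vh,
        ‖w - wh‖ ≤ C * (‖w - wI‖
          + (⨆ vh : {x : V // x ∈ Vh ∧ x ≠ 0}, |a w vh.1 - ah wI vh.1| / ‖vh.1‖)
          + ⨆ vh : {x : V // x ∈ Vh ∧ x ≠ 0}, |F vh.1 - Fh vh.1| / ‖vh.1‖) := by
  refine ⟨1 + 1 / (αlow * α), by positivity, ?_⟩
  intro V _ _ _ Vh _hVc a ah hasymm habd hacoer hahsymm hcomp F Fh w hw wh hwh hwhsol wI hwI
  set δ := wh - wI with hδdef
  clear_value δ
  have hδmem : δ ∈ Vh := hδdef ▸ Vh.sub_mem hwh hwI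
  have ha_nn : ∀ v : V, 0 ≤ a v v := fun v =>
    le_trans (by positivity) (hacoer v)
  have hah_nn : ∀ v ∈ Vh, 0 ≤ ah v v := fun v hv =>
    le_trans (by nlinarith [ha_nn v]) (hcomp v hv).1
  have ha_ub : ∀ v : V, a v v ≤ M * ‖v‖ ^ 2 := by
    intro v
    have := habd v v
    have h1 := le_abs_self (a v v)
    nlinarith [norm_nonneg v]
  -- Cauchy–Schwarz for ah on Vh
  have hcs : ∀ u ∈ Vh, ∀ v ∈ Vh, (ah u v) ^ 2 ≤ ah u u * ah v v := by
    intro u hu v hv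
    refine cs_aux ah u v (hahsymm u hu v hv) ?_
    intro t
    exact hah_nn _ (Vh.add_mem hu (Vh.smul_mem t hv))
  set K := Real.sqrt (ah wI wI * (αup * M)) with hKdef
  have hK : ∀ v ∈ Vh, |ah wI v| ≤ K * ‖v‖ := by
    intro v hv
    have h1 : (ah wI v) ^ 2 ≤ ah wI wI * ah v v := hcs wI hwI v hv
    have h2 : ah v v ≤ αup * (M * ‖v‖ ^ 2) := by
      have := (hcomp v hv).2
      nlinarith [ha_ub v, ha_nn v]
    have h3 : (ah wI v) ^ 2 ≤ (ah wI wI * (αup * M)) * ‖v‖ ^ 2 := by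
      nlinarith [hah_nn wI hwI, hah_nn v hv]
    have h4 : |ah wI v| ^ 2 ≤ (K * ‖v‖) ^ 2 := by
      rw [sq_abs]
      calc (ah wI v) ^ 2 ≤ (ah wI wI * (αup * M)) * ‖v‖ ^ 2 := h3
        _ = (K * ‖v‖) ^ 2 := by
            rw [mul_pow, hKdef,
              Real.sq_sqrt (mul_nonneg (hah_nn wI hwI) (by positivity))]
    have hKnn : 0 ≤ K * ‖v‖ := by positivity
    nlinarith [abs_nonneg (ah wI v)]
  -- the two suprema
  set Sa := ⨆ vh : {x : V // x ∈ Vh ∧ x ≠ 0}, |a w vh.1 - ah wI vh.1| / ‖vh.1‖ with hSa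
  set SF := ⨆ vh : {x : V // x ∈ Vh ∧ x ≠ 0}, |F vh.1 - Fh vh.1| / ‖vh.1‖ with hSF
  have hSa_nn : 0 ≤ Sa := Real.iSup_nonneg (fun vh => by positivity)
  have hSF_nn : 0 ≤ SF := Real.iSup_nonneg (fun vh => by positivity)
  have hbddA : BddAbove (Set.range fun vh : {x : V // x ∈ Vh ∧ x ≠ 0} =>
      |a w vh.1 - ah wI vh.1| / ‖vh.1‖) := by
    refine ⟨M * ‖w‖ + K, ?_⟩
    rintro x ⟨⟨v, hv, hv0⟩, rfl⟩
    have hvn : 0 < ‖v‖ := norm_pos_iff.mpr hv0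
    rw [div_le_iff₀ hvn]
    calc |a w v - ah wI v| ≤ |a w v| + |ah wI v| := abs_sub _ _
      _ ≤ M * ‖w‖ * ‖v‖ + K * ‖v‖ := add_le_add (habd w v) (hK v hv)
      _ = (M * ‖w‖ + K) * ‖v‖ := by ring
  have hbddF : BddAbove (Set.range fun vh : {x : V // x ∈ Vh ∧ x ≠ 0} =>
      |F vh.1 - Fh vh.1| / ‖vh.1‖) := by
    refine ⟨‖F‖ + ‖Fh‖, ?_⟩
    rintro x ⟨⟨v, hv, hv0⟩, rfl⟩
    have hvn : 0 < ‖v‖ := norm_pos_iff.mpr hv0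
    rw [div_le_iff₀ hvn]
    calc |F v - Fh v| ≤ |F v| + |Fh v| := abs_sub _ _
      _ ≤ ‖F‖ * ‖v‖ + ‖Fh‖ * ‖v‖ := by
          gcongr
          · rw [← Real.norm_eq_abs]; exact F.le_opNorm v
          · rw [← Real.norm_eq_abs]; exact Fh.le_opNorm v
      _ = (‖F‖ + ‖Fh‖) * ‖v‖ := by ring
  -- key estimate on ‖δ‖
  have hkey : ‖δ‖ ≤ (Sa + SF) / (αlow * α) := by
    by_cases hδ0 : δ = 0
    · rw [hδ0, norm_zero]
      positivity
    · have hvn : 0 < ‖δ‖ := norm_pos_iff.mpr hδ0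
      have h1 : |a w δ - ah wI δ| / ‖δ‖ ≤ Sa :=
        le_ciSup hbddA (⟨δ, hδmem, hδ0⟩ : {x : V // x ∈ Vh ∧ x ≠ 0})
      have h2 : |F δ - Fh δ| / ‖δ‖ ≤ SF :=
        le_ciSup hbddF (⟨δ, hδmem, hδ0⟩ : {x : V // x ∈ Vh ∧ x ≠ 0})
      have h1' : |a w δ - ah wI δ| ≤ Sa * ‖δ‖ := by
        rw [div_le_iff₀ hvn] at h1; exact h1
      have h2' : |F δ - Fh δ| ≤ SF * ‖δ‖ := by
        rw [div_le_iff₀ hvn] at h2; exact h2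
      have hδδ : ah δ δ = ah wh δ - ah wI δ := by
        subst hδdef
        simp only [map_sub, LinearMap.sub_apply]
        ring
      have hsol : ah wh δ = Fh δ := hwhsol δ hδmem
      have hFδ : a w δ = F δ := hw δ
      have hchain : αlow * α * ‖δ‖ ^ 2 ≤ Sa * ‖δ‖ + SF * ‖δ‖ := by
        have hc1 : αlow * (α * ‖δ‖ ^ 2) ≤ αlow * a δ δ := by
          nlinarith [hacoer δ]
        have hc2 : αlow * a δ δ ≤ ah δ δ := (hcomp δ hδmem).1
        have : ah δ δ = (Fh δ - F δ) + (a w δ - ah wI δ) := by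
          rw [hδδ, hsol, hFδ]; ring
        have hub : ah δ δ ≤ |F δ - Fh δ| + |a w δ - ah wI δ| := by
          rw [this]
          have := abs_le.mp (le_refl |F δ - Fh δ|)
          calc (Fh δ - F δ) + (a w δ - ah wI δ)
              ≤ |Fh δ - F δ| + |a w δ - ah wI δ| :=
                add_le_add (le_abs_self _) (le_abs_self _)
            _ = |F δ - Fh δ| + |a w δ - ah wI δ| := by rw [abs_sub_comm]
        nlinarith
      have hmul : (αlow * α * ‖δ‖) * ‖δ‖ ≤ (Sa + SF) * ‖δ‖ := by
        nlinarith [hchain]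
      have hfin : αlow * α * ‖δ‖ ≤ Sa + SF := le_of_mul_le_mul_right hmul hvn
      rw [le_div_iff₀ (by positivity)]
      linarith [hfin]
  -- conclude
  have htri : ‖w - wh‖ ≤ ‖w - wI‖ + ‖δ‖ := by
    have : w - wh = (w - wI) - δ := by rw [hδdef]; abel
    rw [this]
    exact norm_sub_le _ _
  have hC : (0:ℝ) < αlow * α := by positivity
  have hδb : ‖δ‖ ≤ (Sa + SF) / (αlow * α) := hkey
  have hdivle : (Sa + SF) / (αlow * α) = (1 / (αlow * α)) * (Sa + SF) := by
    ring
  calc ‖w - wh‖ ≤ ‖w - wI‖ + ‖δ‖ := htri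
    _ ≤ ‖w - wI‖ + (1 / (αlow * α)) * (Sa + SF) := by
        rw [← hdivle]; linarith
    _ ≤ (1 + 1 / (αlow * α)) * (‖w - wI‖ + Sa + SF) := by
        have h1 : 0 ≤ 1 / (αlow * α) := by positivity
        nlinarith [norm_nonneg (w - wI)]
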